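/- arXiv:2206.07884 — 2 statements merged into one kernel-verified Lean document; each statement's English description precedes it below -/
import Mathlib

section
/- Let $\varphi_k,\varphi_{k+1}\in C^{1}(Q_7')$ with $\varphi_k\le\varphi_{k+1}$ and $\|D\varphi_k\|_\infty,\|D\varphi_{k+1}\|_\infty\le 1/(20n)$. Define $T_k(x^1,x') = (x^1-\varphi_k(x'))/(\varphi_{k+1}(x')-\varphi_k(x'))$ on the strip $Q_6^k=\{(x^1,x')\in Q_6 : \varphi_k(x') < x^1 \le \varphi_{k+1}(x')\}$ (assuming $\varphi_k+\delta\le\varphi_{k+1}$ for some $\delta>0$), and define the flow displacement $\psi(x,t') = (\varphi_{k+1}(x'+t')-\varphi_{k+1}(x'))T_k(x) + (\varphi_k(x'+t')-\varphi_k(x'))(1-T_k(x))$ for $(x,t')\in Q_6^k\times Q_1'$. Then for all $(x,t')\in Q_6^k\times Q_1'$ the point $(x^1+\psi(x,t'),\,x'+t')$ lies in the strip $Q_7^k = \{(y^1,y')\in Q_7 : \varphi_k(y') < y^1 \le \varphi_{k+1}(y')\}$. -/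
/-- The interpolation flow between two bounding graphs preserves the strip between them. -/
theorem stmt_1 (m : ℕ) (φk φk1 : (Fin m → ℝ) → ℝ) (δ : ℝ) (hδ : 0 < δ)
    (hsep : ∀ x' : Fin m → ℝ, ‖x'‖ < 7 → φk x' + δ ≤ φk1 x')
    (hdk : ∀ x' : Fin m → ℝ, ‖x'‖ < 7 → DifferentiableAt ℝ φk x')
    (hdl : ∀ x' : Fin m → ℝ, ‖x'‖ < 7 → DifferentiableAt ℝ φk1 x')
    (hgk : ∀ x' : Fin m → ℝ, ‖x'‖ < 7 → ‖fderiv ℝ φk x'‖ ≤ 1 / (20 * (m + 1)))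
    (hgl : ∀ x' : Fin m → ℝ, ‖x'‖ < 7 → ‖fderiv ℝ φk1 x'‖ ≤ 1 / (20 * (m + 1))) :
    ∀ (x1 : ℝ) (x' t' : Fin m → ℝ),
      |x1| < 6 → ‖x'‖ < 6 → φk x' < x1 → x1 ≤ φk1 x' → ‖t'‖ < 1 →
      |x1 + ((φk1 (x' + t') - φk1 x') * ((x1 - φk x') / (φk1 x' - φk x')) +
              (φk (x' + t') - φk x') * (1 - (x1 - φk x') / (φk1 x' - φk x')))| < 7 ∧
      ‖x' + t'‖ < 7 ∧
      φk (x' + t') <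
        x1 + ((φk1 (x' + t') - φk1 x') * ((x1 - φk x') / (φk1 x' - φk x')) +
              (φk (x' + t') - φk x') * (1 - (x1 - φk x') / (φk1 x' - φk x'))) ∧
      x1 + ((φk1 (x' + t') - φk1 x') * ((x1 - φk x') / (φk1 x' - φk x')) +
              (φk (x' + t') - φk x') * (1 - (x1 - φk x') / (φk1 x' - φk x'))) ≤
        φk1 (x' + t') := by
  intro x1 x' t' hx1 hx' hlow hhigh ht'
  set y' := x' + t' with hy'def
  have hy'7 : ‖y'‖ < 7 := by
    calc ‖x' + t'‖ ≤ ‖x'‖ + ‖t'‖ := norm_add_le _ _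
    _ < 7 := by linarith
  have hx'7 : ‖x'‖ < 7 := by linarith
  -- Lipschitz bounds
  have hball : Convex ℝ (Metric.ball (0 : Fin m → ℝ) 7) := convex_ball 0 7
  have hmemx : x' ∈ Metric.ball (0 : Fin m → ℝ) 7 := by
    simpa [Metric.mem_ball, dist_eq_norm] using hx'7
  have hmemy : y' ∈ Metric.ball (0 : Fin m → ℝ) 7 := by
    simpa [Metric.mem_ball, dist_eq_norm] using hy'7
  have hmem7 : ∀ z ∈ Metric.ball (0 : Fin m → ℝ) 7, ‖z‖ < 7 := by
    intro z hz; simpa [Metric.mem_ball, dist_eq_norm] using hz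
  have hC : (1:ℝ) / (20 * (m + 1)) ≤ 1 / 20 := by
    apply one_div_le_one_div_of_le
    · norm_num
    · have : (0:ℝ) ≤ (m:ℝ) := Nat.cast_nonneg m
      nlinarith
  have key : ∀ φ : (Fin m → ℝ) → ℝ,
      (∀ z : Fin m → ℝ, ‖z‖ < 7 → DifferentiableAt ℝ φ z) →
      (∀ z : Fin m → ℝ, ‖z‖ < 7 → ‖fderiv ℝ φ z‖ ≤ 1 / (20 * (m + 1))) →
      |φ y' - φ x'| ≤ 1 / 20 := by
    intro φ hd hg
    have := hball.norm_image_sub_le_of_norm_fderiv_le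
      (fun z hz => hd z (hmem7 z hz)) (fun z hz => hg z (hmem7 z hz)) hmemx hmemy
    have hyx : ‖y' - x'‖ = ‖t'‖ := by simp [hy'def]
    rw [Real.norm_eq_abs] at this
    have h2 : (1:ℝ) / (20 * (m + 1)) * ‖y' - x'‖ ≤ 1 / 20 := by
      rw [hyx]
      have h3 : (0:ℝ) ≤ 1 / (20 * (m + 1)) := by positivity
      calc (1:ℝ) / (20 * (m + 1)) * ‖t'‖ ≤ 1 / (20 * (m + 1)) * 1 :=
        mul_le_mul_of_nonneg_left ht'.le h3
      _ ≤ 1 / 20 := by rw [mul_one]; exact hC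
    linarith
  have hLk : |φk y' - φk x'| ≤ 1 / 20 := key φk hdk hgk
  have hLl : |φk1 y' - φk1 x'| ≤ 1 / 20 := key φk1 hdl hgl
  -- setup
  have hd : φk x' < φk1 x' := by have := hsep x' hx'7; linarith
  have hdy : φk y' + δ ≤ φk1 y' := hsep y' hy'7
  set T : ℝ := (x1 - φk x') / (φk1 x' - φk x') with hT
  have hdpos : 0 < φk1 x' - φk x' := by linarith
  have hT0 : 0 < T := div_pos (by linarith) hdpos
  have hT1 : T ≤ 1 := (div_le_one hdpos).2 (by linarith)
  have hTd : T * (φk1 x' - φk x') = x1 - φk x' := div_mul_cancel₀ _ (ne_of_gt hdpos)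
  have hx1eq : x1 = φk x' + T * (φk1 x' - φk x') := by linarith
  set y1 : ℝ := x1 + ((φk1 y' - φk1 x') * T + (φk y' - φk x') * (1 - T)) with hy1
  have hy1eq : y1 = (1 - T) * φk y' + T * φk1 y' := by
    rw [hy1, hx1eq]; ring
  refine ⟨?_, hy'7, ?_, ?_⟩
  · have h1 : |(φk1 y' - φk1 x') * T + (φk y' - φk x') * (1 - T)| ≤ 1 / 20 := by
      calc |(φk1 y' - φk1 x') * T + (φk y' - φk x') * (1 - T)|
          ≤ |(φk1 y' - φk1 x') * T| + |(φk y' - φk x') * (1 - T)| := abs_add_le _ _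
        _ = |φk1 y' - φk1 x'| * T + |φk y' - φk x'| * (1 - T) := by
            rw [abs_mul, abs_mul, abs_of_pos hT0, abs_of_nonneg (by linarith : (0:ℝ) ≤ 1 - T)]
        _ ≤ (1/20) * T + (1/20) * (1 - T) := by
            gcongr
        _ = 1 / 20 := by ring
    have := abs_add_le x1 ((φk1 y' - φk1 x') * T + (φk y' - φk x') * (1 - T))
    calc |x1 + ((φk1 y' - φk1 x') * T + (φk y' - φk x') * (1 - T))| ≤
        |x1| + |(φk1 y' - φk1 x') * T + (φk y' - φk x') * (1 - T)| := abs_add_le _ _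
      _ < 7 := by linarith
  · show φk y' < y1
    rw [hy1eq]; nlinarith
  · show y1 ≤ φk1 y'
    rw [hy1eq]; nlinarith
end

section
/- Let $\phi:[0,R]\to[0,\infty)$ and suppose there are constants $A,B\ge0$ and $0\le\beta<\alpha$ such that $\phi(\rho)\le A(\rho/r)^\alpha\phi(r) + B r^\beta (r/\rho)^n$ for all $0<\rho\le r\le R$. Then for each $\gamma\in(\beta,\alpha)$ there exists $c=c(n,A,\alpha,\beta,\gamma)$ such that $\phi(\rho)\le c\big[(\rho/r)^\gamma\phi(r) + B\rho^\beta\big]$ for all $0<\rho\le r\le R$. -/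
set_option maxHeartbeats 1000000 in
/-- Iteration lemma: a decay inequality with amplification factor `(r/ρ)^n` on the
inhomogeneous term still yields polynomial decay at any intermediate rate `γ ∈ (β,α)`. -/
theorem stmt_14 (n : ℕ) (R A B α β : ℝ) (hR : 0 < R) (hA : 0 ≤ A) (hB : 0 ≤ B)
    (hβ : 0 ≤ β) (hβα : β < α)
    (φ : ℝ → ℝ) (hφ : ∀ t, 0 ≤ t → t ≤ R → 0 ≤ φ t)
    (hdecay : ∀ ρ r : ℝ, 0 < ρ → ρ ≤ r → r ≤ R →
      φ ρ ≤ A * (ρ / r) ^ α * φ r + B * r ^ β * ((r / ρ) ^ n)) :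
    ∀ γ : ℝ, β < γ → γ < α → ∃ c > 0, ∀ ρ r : ℝ, 0 < ρ → ρ ≤ r → r ≤ R →
      φ ρ ≤ c * ((ρ / r) ^ γ * φ r + B * ρ ^ β) := by
  intro γ hβγ hγα
  have hγ0 : 0 < γ := lt_of_le_of_lt hβ hβγ
  have hα0 : 0 < α := lt_trans hγ0 hγα
  have hA1 : (0:ℝ) < A + 1 := by linarith
  set τ : ℝ := min (1/2) ((A+1) ^ (-(α-γ)⁻¹)) with hτdef
  have hτ0 : 0 < τ := lt_min (by norm_num) (Real.rpow_pos_of_pos hA1 _)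
  have hτ1 : τ < 1 := lt_of_le_of_lt (min_le_left _ _) (by norm_num)
  have hτle : τ ≤ (A+1) ^ (-(α-γ)⁻¹) := min_le_right _ _
  clear_value τ
  have hαγ : (0:ℝ) < α - γ := by linarith
  have hAτ : A * τ ^ (α - γ) ≤ 1 := by
    have h1 : τ ^ (α - γ) ≤ ((A+1) ^ (-(α-γ)⁻¹)) ^ (α-γ) :=
      Real.rpow_le_rpow hτ0.le hτle hαγ.le
    rw [← Real.rpow_mul hA1.le] at h1
    have e : -(α-γ)⁻¹ * (α-γ) = -1 := by field_simp
    rw [e, Real.rpow_neg_one] at h1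
    have h2 := mul_le_mul_of_nonneg_left h1 hA
    have h3 : (A + 1) * (A + 1)⁻¹ = 1 := mul_inv_cancel₀ hA1.ne'
    nlinarith [h2, h3, inv_nonneg.mpr hA1.le]
  -- one-step decay
  have hstep : ∀ r : ℝ, 0 < r → r ≤ R →
      φ (τ * r) ≤ τ ^ γ * φ r + τ⁻¹ ^ n * (B * r ^ β) := by
    intro r hr hrR
    have hτr : τ * r ≤ r := mul_le_of_le_one_left hr.le hτ1.le
    have h := hdecay (τ * r) r (by positivity) hτr hrR
    have e1 : τ * r / r = τ := by field_simp
    have e2 : r / (τ * r) = τ⁻¹ := by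
      rw [div_mul_eq_div_div_swap, div_self hr.ne', one_div]
    rw [e1, e2] at h
    have hφr : 0 ≤ φ r := hφ r hr.le hrR
    have hAa : A * τ ^ α ≤ τ ^ γ := by
      have e3 : τ ^ α = τ ^ (α - γ) * τ ^ γ := by
        rw [← Real.rpow_add hτ0]; ring_nf
      have hγpos : (0:ℝ) ≤ τ ^ γ := (Real.rpow_pos_of_pos hτ0 γ).le
      calc A * τ ^ α = (A * τ ^ (α - γ)) * τ ^ γ := by rw [e3]; ring
        _ ≤ 1 * τ ^ γ := mul_le_mul_of_nonneg_right hAτ hγpos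
        _ = τ ^ γ := one_mul _
    calc φ (τ * r) ≤ A * τ ^ α * φ r + B * r ^ β * τ⁻¹ ^ n := h
      _ ≤ τ ^ γ * φ r + τ⁻¹ ^ n * (B * r ^ β) := by
          have := mul_le_mul_of_nonneg_right hAa hφr
          linarith
  set K : ℝ := τ⁻¹ ^ n with hKdef
  have hK0 : 0 < K := by positivity
  clear_value K
  have hden : 0 < τ ^ β - τ ^ γ :=
    sub_pos.mpr (Real.rpow_lt_rpow_of_exponent_gt hτ0 hτ1 hβγ)
  set M : ℝ := K / (τ ^ β - τ ^ γ) with hMdef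
  have hM0 : 0 ≤ M := div_nonneg hK0.le hden.le
  clear_value M
  have hMkey : τ ^ γ * M + K = τ ^ β * M := by
    rw [hMdef]; field_simp; ring
  -- iterated decay
  have hiter : ∀ (k : ℕ) (r : ℝ), 0 < r → r ≤ R →
      φ (τ ^ k * r) ≤ (τ ^ k) ^ γ * φ r + M * B * (τ ^ k * r) ^ β := by
    intro k
    induction k with
    | zero =>
        intro r hr hrR
        have h1 : 0 ≤ M * B * r ^ β := by positivity
        simp only [pow_zero, one_mul, Real.one_rpow]
        linarith
    | succ k ih =>
        intro r hr hrR
        have hτk1 : (0:ℝ) < τ ^ k := by positivity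
        have hτkr : 0 < τ ^ k * r := by positivity
        have hτkle : τ ^ k ≤ 1 := pow_le_one₀ hτ0.le hτ1.le
        have hτkrR : τ ^ k * r ≤ R := le_trans (mul_le_of_le_one_left hr.le hτkle) hrR
        have h1 := hstep (τ ^ k * r) hτkr hτkrR
        have h2 := ih r hr hrR
        have hγnn : (0:ℝ) ≤ τ ^ γ := (Real.rpow_pos_of_pos hτ0 γ).le
        have e : τ ^ (k+1) * r = τ * (τ ^ k * r) := by ring
        have eγ : ((τ:ℝ) ^ (k+1)) ^ γ = τ ^ γ * (τ ^ k) ^ γ := by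
          rw [pow_succ']
          exact Real.mul_rpow hτ0.le hτk1.le
        have eβ : ((τ:ℝ) ^ (k+1) * r) ^ β = τ ^ β * (τ ^ k * r) ^ β := by
          rw [show (τ:ℝ) ^ (k+1) * r = τ * (τ ^ k * r) by ring]
          exact Real.mul_rpow hτ0.le hτkr.le
        calc φ (τ ^ (k+1) * r) = φ (τ * (τ ^ k * r)) := by rw [e]
          _ ≤ τ ^ γ * φ (τ ^ k * r) + K * (B * (τ ^ k * r) ^ β) := h1
          _ ≤ τ ^ γ * ((τ ^ k) ^ γ * φ r + M * B * (τ ^ k * r) ^ β)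
                + K * (B * (τ ^ k * r) ^ β) := by
              exact add_le_add (mul_le_mul_of_nonneg_left h2 hγnn) le_rfl
          _ = (τ ^ (k+1)) ^ γ * φ r + (τ ^ γ * M + K) * (B * (τ ^ k * r) ^ β) := by
              rw [eγ]; ring
          _ = (τ ^ (k+1)) ^ γ * φ r + M * B * (τ ^ (k+1) * r) ^ β := by
              rw [hMkey, eβ]; ring
  -- conclusion
  have hτγ : (0:ℝ) < τ ^ γ := Real.rpow_pos_of_pos hτ0 γ
  have hτβ : (0:ℝ) < τ ^ β := Real.rpow_pos_of_pos hτ0 β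
  refine ⟨A / τ ^ γ + (A * M + K) / τ ^ β + 1, by positivity, ?_⟩
  intro ρ r hρ hρr hrR
  have hr0 : 0 < r := lt_of_lt_of_le hρ hρr
  have hex : ∃ m : ℕ, τ ^ m * r < ρ := by
    obtain ⟨m, hm⟩ := exists_pow_lt_of_lt_one (div_pos hρ hr0) hτ1
    exact ⟨m, (lt_div_iff₀ hr0).mp hm⟩
  classical
  have hk₀spec := Nat.find_spec hex
  have hk₀pos : Nat.find hex ≠ 0 := by
    intro h
    rw [h] at hk₀spec
    simp only [pow_zero, one_mul] at hk₀spec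
    linarith
  obtain ⟨k, hk⟩ := Nat.exists_eq_succ_of_ne_zero hk₀pos
  rw [hk] at hk₀spec
  have h1 : τ ^ (k+1) * r < ρ := hk₀spec
  have h2 : ρ ≤ τ ^ k * r := le_of_not_gt (Nat.find_min hex (by omega))
  set s : ℝ := τ ^ k * r with hsdef
  have hts : τ * s < ρ := by
    have e : τ * s = τ ^ (k+1) * r := by rw [hsdef]; ring
    rw [e]; exact h1
  have hs0 : 0 < s := lt_of_lt_of_le hρ h2
  clear_value s
  have hτk1 : (0:ℝ) < τ ^ k := by positivity
  have hτkle : τ ^ k ≤ 1 := pow_le_one₀ hτ0.le hτ1.le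
  have hsr : s ≤ r := by rw [hsdef]; exact mul_le_of_le_one_left hr0.le hτkle
  have hsR : s ≤ R := le_trans hsr hrR
  have h3 := hdecay ρ s hρ h2 hsR
  have hφs : 0 ≤ φ s := hφ s hs0.le hsR
  have hφr : 0 ≤ φ r := hφ r hr0.le hrR
  -- (ρ/s)^α ≤ 1
  have hfrac1 : (ρ / s) ^ α ≤ 1 :=
    Real.rpow_le_one (by positivity) ((div_le_one hs0).mpr h2) hα0.le
  -- (s/ρ)^n ≤ K
  have hsρτ : s < τ⁻¹ * ρ := by
    calc s = τ⁻¹ * (τ * s) := by field_simp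
      _ < τ⁻¹ * ρ := mul_lt_mul_of_pos_left hts (by positivity)
  have hfrac2 : (s / ρ) ^ n ≤ K := by
    rw [hKdef]
    apply pow_le_pow_left₀ (by positivity)
    rw [div_le_iff₀ hρ]
    exact hsρτ.le
  -- (τ^k)^γ ≤ (ρ/r)^γ / τ^γ
  have hfrac3 : ((τ:ℝ) ^ k) ^ γ ≤ (ρ / r) ^ γ / τ ^ γ := by
    have hlt : ((τ:ℝ) ^ (k+1)) ^ γ ≤ (ρ / r) ^ γ := by
      apply Real.rpow_le_rpow (by positivity) _ hγ0.le
      rw [le_div_iff₀ hr0]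
      exact h1.le
    have eγ : ((τ:ℝ) ^ (k+1)) ^ γ = τ ^ γ * (τ ^ k) ^ γ := by
      rw [pow_succ']
      exact Real.mul_rpow hτ0.le hτk1.le
    rw [eγ] at hlt
    rw [le_div_iff₀ hτγ]
    linarith [hlt]
  -- s^β ≤ ρ^β / τ^β
  have hfrac4 : s ^ β ≤ ρ ^ β / τ ^ β := by
    have hsle : s ≤ ρ / τ := by
      rw [le_div_iff₀ hτ0]
      linarith [hts]
    calc s ^ β ≤ (ρ / τ) ^ β := Real.rpow_le_rpow hs0.le hsle hβ
      _ = ρ ^ β / τ ^ β := Real.div_rpow hρ.le hτ0.le β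
  -- chain everything
  have step1 : φ ρ ≤ A * φ s + K * (B * s ^ β) := by
    have t1 : A * (ρ / s) ^ α * φ s ≤ A * φ s := by
      have := mul_le_mul_of_nonneg_right
        (mul_le_mul_of_nonneg_left hfrac1 hA) hφs
      simpa using this
    have t2 : B * s ^ β * (s / ρ) ^ n ≤ K * (B * s ^ β) := by
      have hbs : 0 ≤ B * s ^ β := by positivity
      have := mul_le_mul_of_nonneg_left hfrac2 hbs
      linarith [this]
    linarith [h3]
  have step2 : φ s ≤ (ρ / r) ^ γ / τ ^ γ * φ r + M * B * (ρ ^ β / τ ^ β) := by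
    have := hiter k r hr0 hrR
    have t1 : ((τ:ℝ) ^ k) ^ γ * φ r ≤ (ρ / r) ^ γ / τ ^ γ * φ r :=
      mul_le_mul_of_nonneg_right hfrac3 hφr
    have t2 : M * B * s ^ β ≤ M * B * (ρ ^ β / τ ^ β) :=
      mul_le_mul_of_nonneg_left hfrac4 (by positivity)
    rw [← hsdef] at this
    linarith
  have step3 : K * (B * s ^ β) ≤ K * (B * (ρ ^ β / τ ^ β)) := by
    have : B * s ^ β ≤ B * (ρ ^ β / τ ^ β) := mul_le_mul_of_nonneg_left hfrac4 hB
    exact mul_le_mul_of_nonneg_left this hK0.le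
  have hX : 0 ≤ (ρ / r) ^ γ * φ r := by positivity
  have hY : 0 ≤ B * ρ ^ β := by positivity
  have hfin : φ ρ ≤ (A / τ ^ γ) * ((ρ / r) ^ γ * φ r) + ((A * M + K) / τ ^ β) * (B * ρ ^ β) := by
    have t1 : A * φ s ≤ A * ((ρ / r) ^ γ / τ ^ γ * φ r + M * B * (ρ ^ β / τ ^ β)) :=
      mul_le_mul_of_nonneg_left step2 hA
    have e : A * ((ρ / r) ^ γ / τ ^ γ * φ r + M * B * (ρ ^ β / τ ^ β))
        + K * (B * (ρ ^ β / τ ^ β))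
        = (A / τ ^ γ) * ((ρ / r) ^ γ * φ r) + ((A * M + K) / τ ^ β) * (B * ρ ^ β) := by
      ring
    linarith [step1, t1, step3, e.le]
  have hc1 : (0:ℝ) ≤ (A * M + K) / τ ^ β := by positivity
  have hc2 : (0:ℝ) ≤ A / τ ^ γ := by positivity
  calc φ ρ ≤ (A / τ ^ γ) * ((ρ / r) ^ γ * φ r) + ((A * M + K) / τ ^ β) * (B * ρ ^ β) := hfin
    _ ≤ (A / τ ^ γ) * ((ρ / r) ^ γ * φ r) + ((A * M + K) / τ ^ β) * (B * ρ ^ β)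
        + ((A / τ ^ γ) * (B * ρ ^ β) + ((A * M + K) / τ ^ β) * ((ρ / r) ^ γ * φ r)
          + ((ρ / r) ^ γ * φ r + B * ρ ^ β)) := by
        have n1 : 0 ≤ (A / τ ^ γ) * (B * ρ ^ β) := mul_nonneg hc2 hY
        have n2 : 0 ≤ ((A * M + K) / τ ^ β) * ((ρ / r) ^ γ * φ r) := mul_nonneg hc1 hX
        linarith
    _ = (A / τ ^ γ + (A * M + K) / τ ^ β + 1) * ((ρ / r) ^ γ * φ r + B * ρ ^ β) := by
        ring
end
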